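/- Let G be a connected simple graph with mixed metric dimension β_M(G), and let v be a vertex with deg(v) > 2^{β_M(G)−1} − 1. Then v is not a member of any mixed resolving set of cardinality β_M(G). -/

import Mathlib

open SimpleGraph

/-- Distance from a vertex `w` to an edge `e` (as a `Sym2`). -/
noncomputable def edist {V : Type*} (G : SimpleGraph V) (w : V) (e : Sym2 V) : Nat :=
  Sym2.lift ⟨fun u v => min (G.dist w u) (G.dist w v), fun u v => min_comm _ _⟩ e

/-- `S` is a mixed resolving set: every two distinct elements of `V ∪ E`
are distinguished by the distance to some vertex of `S`. -/
def MixedResolvingSet {V : Type*} (G : SimpleGraph V) (S : Set V) : Prop :=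
  (∀ u v : V, u ≠ v → ∃ w ∈ S, G.dist w u ≠ G.dist w v) ∧
  (∀ e ∈ G.edgeSet, ∀ f ∈ G.edgeSet, e ≠ f → ∃ w ∈ S, edist G w e ≠ edist G w f) ∧
  (∀ u : V, ∀ e ∈ G.edgeSet, ∃ w ∈ S, G.dist w u ≠ edist G w e)

/-- The mixed metric dimension of `G`. -/
noncomputable def mixedDim {V : Type*} (G : SimpleGraph V) : Nat :=
  sInf {n | ∃ S : Set V, MixedResolvingSet G S ∧ S.ncard = n}

lemma edist_mk {V : Type*} (G : SimpleGraph V) (w a b : V) :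
    edist G w s(a, b) = min (G.dist w a) (G.dist w b) := rfl

theorem stmt_1 {V : Type*} [Fintype V] (G : SimpleGraph V) [DecidableRel G.Adj]
    (hG : G.Connected) (v : V) (hv : G.degree v > 2 ^ (mixedDim G - 1) - 1) :
    ∀ S : Set V, MixedResolvingSet G S → S.ncard = mixedDim G → v ∉ S := by
  intro S hS hcard hvS
  classical
  obtain ⟨hver, hedge, hmix⟩ := hS
  have hSfin : S.Finite := Set.toFinite S
  -- edist at v is 0 for incident edges
  have hev : ∀ u : V, edist G v s(v, u) = 0 := by
    intro u
    rw [edist_mk]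
    simp [hG.dist_eq_zero_iff]
  -- the key bounds for w ≠ v and u adjacent to v
  have hbound : ∀ w : V, w ≠ v → ∀ u : V, G.Adj v u →
      G.dist w v - 1 ≤ edist G w s(v, u) ∧ edist G w s(v, u) ≤ G.dist w v := by
    intro w hw u hadj
    rw [edist_mk]
    have h1 : G.dist w v ≤ G.dist w u + 1 := by
      have := hG.dist_triangle (u := w) (v := u) (w := v)
      have hd : G.dist u v = 1 := dist_eq_one_iff_adj.mpr hadj.symm
      omega
    constructor
    · omega
    · exact min_le_left _ _
  have hpos : ∀ w : V, w ≠ v → 0 < G.dist w v := fun w hw => hG.pos_dist_of_ne hw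
  -- boolean fingerprint
  set T : Set V := S \ {v} with hT
  have := Fintype.ofFinite ↥T
  let F : V → (↥T → Bool) := fun u w => decide (edist G w.1 s(v, u) < G.dist w.1 v)
  -- injection from Option (neighborSet v)
  let Φ : Option ↥(G.neighborSet v) → (↥T → Bool) := fun o =>
    match o with
    | none => fun _ => false
    | some u => F u.1
  have hΦinj : Function.Injective Φ := by
    rintro (_ | ⟨u₁, hu₁⟩) (_ | ⟨u₂, hu₂⟩) h
    · rfl
    · -- none = some u₂ : F u₂ = const false, contradicts distinguishing v from edge
      exfalso
      have he2 : s(v, u₂) ∈ G.edgeSet := hu₂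
      obtain ⟨w, hwS, hwne⟩ := hmix v s(v, u₂) he2
      have hwv : w ≠ v := by
        intro h'; subst h'
        rw [hev u₂, hG.dist_eq_zero_iff.mpr rfl] at hwne
        exact hwne rfl
      have hwT : w ∈ T := ⟨hwS, hwv⟩
      have := congrFun h ⟨w, hwT⟩
      simp only [Φ, F] at this
      have hle := (hbound w hwv u₂ hu₂).2
      have : ¬ (edist G w s(v, u₂) < G.dist w v) := by
        simpa using this.symm
      omega
    · -- some u₁ = none : symmetric
      exfalso
      have he1 : s(v, u₁) ∈ G.edgeSet := hu₁
      obtain ⟨w, hwS, hwne⟩ := hmix v s(v, u₁) he1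
      have hwv : w ≠ v := by
        intro h'; subst h'
        rw [hev u₁, hG.dist_eq_zero_iff.mpr rfl] at hwne
        exact hwne rfl
      have hwT : w ∈ T := ⟨hwS, hwv⟩
      have := congrFun h ⟨w, hwT⟩
      simp only [Φ, F] at this
      have hle := (hbound w hwv u₁ hu₁).2
      have : ¬ (edist G w s(v, u₁) < G.dist w v) := by
        simpa using this
      omega
    · -- some = some
      congr 1
      by_contra hne'
      have hne : u₁ ≠ u₂ := fun h => hne' (Subtype.ext h)
      have he1 : s(v, u₁) ∈ G.edgeSet := hu₁
      have he2 : s(v, u₂) ∈ G.edgeSet := hu₂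
      have hEne : s(v, u₁) ≠ s(v, u₂) := by
        intro h'
        rw [Sym2.eq_iff] at h'
        rcases h' with ⟨-, h'⟩ | ⟨h1, h2⟩
        · exact hne h'
        · exact hne (h2.trans h1)
      obtain ⟨w, hwS, hwne⟩ := hedge _ he1 _ he2 hEne
      have hwv : w ≠ v := by
        intro h'; subst h'
        rw [hev u₁, hev u₂] at hwne
        exact hwne rfl
      have hwT : w ∈ T := ⟨hwS, hwv⟩
      have hF := congrFun h ⟨w, hwT⟩
      simp only [Φ, F, decide_eq_decide] at hF
      have h1 := hbound w hwv u₁ hu₁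
      have h2 := hbound w hwv u₂ hu₂
      have hp := hpos w hwv
      omega
  -- cardinality count
  have hcardle : Fintype.card (Option ↥(G.neighborSet v)) ≤ Fintype.card (↥T → Bool) :=
    Fintype.card_le_of_injective Φ hΦinj
  have hne : S.ncard ≠ 0 := by
    intro h
    rw [Set.ncard_eq_zero hSfin] at h
    simp [h] at hvS
  have hTcard : T.ncard = S.ncard - 1 := Set.ncard_diff_singleton_of_mem hvS
  have hTfc : Fintype.card ↥T = T.ncard := by
    rw [← Nat.card_coe_set_eq, Nat.card_eq_fintype_card]
  have hdeg : Fintype.card (Option ↥(G.neighborSet v)) = G.degree v + 1 := by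
    rw [Fintype.card_option, G.card_neighborSet_eq_degree]
  rw [hdeg, Fintype.card_fun, Fintype.card_bool, hTfc, hTcard, hcard] at hcardle
  have h1 : 0 < 2 ^ (mixedDim G - 1) := Nat.pow_pos (by norm_num)
  set X := 2 ^ (mixedDim G - 1) with hX
  omega
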